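/- Fix c > 0 and λ ∈ ℝ with |λ| < c. For n : ℕ define C_n := sup over t ∈ [0,1] of [(n²/4 − n/2)·φ(c/n, (c+λ)/n; t) + (n²/4)·φ(c/n, (c−λ)/n; t)], where φ(r,q;t) := −log(r^{1−t}·q^t + (1−r)^{1−t}·(1−q)^t) with real powers. Then C_n/n converges, as n → ∞ (Filter.atTop), to J(λ) := sup over t ∈ [0,1] of (1/4)·[2c − c^{1−t}·((c+λ)^t + (c−λ)^t)]. Equivalently, the Chernoff information between the sparse balanced two-block SBM with edge probabilities (c±λ)/n and the sparse Erdős–Rényi model with edge probability c/n satisfies C_n = J(λ)·n + o(n). -/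

import Mathlib

open Filter Real

/-- Per-edge Chernoff objective
`φ(r,q;t) = −log(r^(1−t) q^t + (1−r)^(1−t) (1−q)^t)` (real powers). -/
noncomputable def chernoffPhi (r q t : ℝ) : ℝ :=
  -Real.log (r ^ (1 - t) * q ^ t + (1 - r) ^ (1 - t) * (1 - q) ^ t)

lemma log_one_sub_ub {x : ℝ} (h0 : 0 < x) (h1 : x ≤ 1/2) : Real.log (1-x) ≤ -x := by
  have := Real.log_le_sub_one_of_pos (x := 1-x) (by linarith)
  linarith

lemma exp_neg_le_inv_one_add {v : ℝ} (hv : 0 ≤ v) : Real.exp (-v) ≤ 1 / (1+v) := by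
  have h1 : 1 + v ≤ Real.exp v := by linarith [Real.add_one_le_exp v]
  rw [le_div_iff₀ (by linarith)]
  calc Real.exp (-v) * (1+v) ≤ Real.exp (-v) * Real.exp v := by
        exact mul_le_mul_of_nonneg_left h1 (Real.exp_pos _).le
    _ = 1 := by rw [← Real.exp_add]; simp

lemma log_one_sub_lb {x : ℝ} (h0 : 0 < x) (h1 : x ≤ 1/2) : -(x + 2*x^2) ≤ Real.log (1-x) := by
  rw [Real.le_log_iff_exp_le (by linarith)]
  have h2 : (0:ℝ) < 1 + (x + 2*x^2) := by nlinarith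
  have h3 := exp_neg_le_inv_one_add (v := x + 2*x^2) (by nlinarith)
  have h4 : 1 / (1 + (x + 2*x^2)) ≤ 1 - x := by
    rw [div_le_iff₀ h2]; nlinarith
  linarith

lemma exp_le_of_nonpos {u : ℝ} (h : u ≤ 0) : Real.exp u ≤ 1 + u + u^2 := by
  have h1 : 1 + (-u) ≤ Real.exp (-u) := by linarith [Real.add_one_le_exp (-u)]
  have hpos : (0:ℝ) < 1 + u + u^2 := by nlinarith [sq_nonneg (u + 1/2)]
  have h2 : Real.exp u = 1 / Real.exp (-u) := by
    rw [one_div, ← Real.exp_neg, neg_neg]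
  rw [h2, div_le_iff₀ (Real.exp_pos _)]
  calc (1:ℝ) ≤ (1 + u + u^2) * (1 + (-u)) := by nlinarith
    _ ≤ (1 + u + u^2) * Real.exp (-u) := by exact mul_le_mul_of_nonneg_left h1 hpos.le

lemma log_one_add_ub {z : ℝ} (h : -(1/2) ≤ z) : Real.log (1+z) ≤ z := by
  have := Real.log_le_sub_one_of_pos (x := 1+z) (by linarith)
  linarith

lemma log_one_add_lb {z : ℝ} (h : -(1/2) ≤ z) : z - 2*z^2 ≤ Real.log (1+z) := by
  have hz : (0:ℝ) < 1 + z := by linarith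
  have h1 : Real.log (1+z)⁻¹ ≤ (1+z)⁻¹ - 1 := Real.log_le_sub_one_of_pos (by positivity)
  rw [Real.log_inv] at h1
  have h2 : z / (1+z) ≤ Real.log (1+z) := by
    have he : (1+z)⁻¹ - 1 = -(z/(1+z)) := by field_simp; ring
    rw [he] at h1; linarith
  have h3 : z - 2*z^2 ≤ z / (1+z) := by
    rw [le_div_iff₀ hz]
    nlinarith [mul_nonneg (sq_nonneg z) (show (0:ℝ) ≤ 1+2*z by linarith)]
  linarith

set_option maxHeartbeats 1000000 in
lemma phi_core {c q t M n : ℝ} (hc : 0 < c) (hq : 0 < q) (ht0 : 0 ≤ t) (ht1 : t ≤ 1)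
    (hMc : c ≤ M) (hMq : q ≤ M) (hn : 8*M ≤ n) :
    |n * chernoffPhi (c/n) (q/n) t - ((1-t)*c + t*q - c^(1-t)*q^t)| ≤ 22*M^2 / n := by
  have hM0 : 0 < M := lt_of_lt_of_le hc hMc
  have hn0 : (0:ℝ) < n := by nlinarith
  set x := c/n with hx_def
  set y := q/n with hy_def
  clear_value x y
  have hx0 : 0 < x := by rw [hx_def]; exact div_pos hc hn0
  have hy0 : 0 < y := by rw [hy_def]; exact div_pos hq hn0
  set d := M/n with hd_def
  clear_value d
  have hd0 : 0 < d := by rw [hd_def]; exact div_pos hM0 hn0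
  have hd8 : d ≤ 1/8 := by rw [hd_def, div_le_iff₀ hn0]; linarith
  have hxd : x ≤ d := by rw [hx_def, hd_def]; gcongr
  have hyd : y ≤ d := by rw [hy_def, hd_def]; gcongr
  set B := c^(1-t)*q^t with hB_def
  clear_value B
  have hB0 : 0 < B := by
    rw [hB_def]; exact mul_pos (Real.rpow_pos_of_pos hc _) (Real.rpow_pos_of_pos hq _)
  have hBM : B ≤ M := by
    rw [hB_def]
    calc c^(1-t)*q^t ≤ M^(1-t) * M^t := by
          apply mul_le_mul (Real.rpow_le_rpow hc.le hMc (by linarith))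
            (Real.rpow_le_rpow hq.le hMq ht0) (Real.rpow_nonneg hq.le _)
            (Real.rpow_nonneg hM0.le _)
      _ = M := by
          rw [← Real.rpow_add hM0, show (1:ℝ)-t+t = 1 by ring, Real.rpow_one]
  set u := Real.log (1-x) * (1-t) + Real.log (1-y) * t with hu_def
  clear_value u
  have key : chernoffPhi x y t = -Real.log (B/n + Real.exp u) := by
    unfold chernoffPhi
    congr 1
    rw [hu_def, Real.exp_add, ← Real.rpow_def_of_pos (by linarith : (0:ℝ) < 1-x),
      ← Real.rpow_def_of_pos (by linarith : (0:ℝ) < 1-y)]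
    congr 1
    rw [hx_def, hy_def, Real.div_rpow hc.le hn0.le, Real.div_rpow hq.le hn0.le,
      div_mul_div_comm, ← Real.rpow_add hn0, show (1:ℝ)-t+t = 1 by ring, Real.rpow_one,
      hB_def]
  -- bounds on u
  have hlx_ub := log_one_sub_ub hx0 (by linarith)
  have hly_ub := log_one_sub_ub hy0 (by linarith)
  have hlx_lb := log_one_sub_lb hx0 (by linarith)
  have hly_lb := log_one_sub_lb hy0 (by linarith)
  set m := (1-t)*x + t*y with hm_def
  clear_value m
  have h1t : (0:ℝ) ≤ 1 - t := by linarith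
  have hm0 : 0 ≤ m := by
    rw [hm_def]; positivity
  have hmd : m ≤ d := by
    rw [hm_def]
    linarith [mul_le_mul_of_nonneg_left hxd h1t, mul_le_mul_of_nonneg_left hyd ht0]
  have hu_ub : u ≤ -m := by
    rw [hu_def, hm_def]
    linarith [mul_le_mul_of_nonneg_right hlx_ub h1t, mul_le_mul_of_nonneg_right hly_ub ht0]
  have hx2 : x^2 ≤ d^2 := pow_le_pow_left₀ hx0.le hxd 2
  have hy2 : y^2 ≤ d^2 := pow_le_pow_left₀ hy0.le hyd 2
  have hu_lb : -(m + 2*d^2) ≤ u := by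
    rw [hu_def, hm_def]
    linarith [mul_le_mul_of_nonneg_right hlx_lb h1t, mul_le_mul_of_nonneg_right hly_lb ht0,
      mul_le_mul_of_nonneg_right hx2 h1t, mul_le_mul_of_nonneg_right hy2 ht0]
  have hu0 : u ≤ 0 := le_trans hu_ub (by linarith)
  have hd2 : d^2 ≤ d/8 := by
    rw [pow_two]
    calc d*d ≤ d*(1/8) := mul_le_mul_of_nonneg_left hd8 hd0.le
      _ = d/8 := by ring
  have hu_lb2 : -(2*d) ≤ u := by linarith
  have hu2 : u^2 ≤ 4*d^2 := by
    have h := sq_le_sq' (show -(2*d) ≤ u by linarith) (show u ≤ 2*d by linarith)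
    calc u^2 ≤ (2*d)^2 := h
      _ = 4*d^2 := by ring
  have hexp_ub : Real.exp u ≤ 1 + u + u^2 := exp_le_of_nonpos hu0
  have hexp_lb : 1 + u ≤ Real.exp u := by linarith [Real.add_one_le_exp u]
  set A := B/n + Real.exp u with hA_def
  set z := A - 1 with hz_def
  clear_value A z
  have hnm : n*m = (1-t)*c + t*q := by
    rw [hm_def, hx_def, hy_def]; field_simp
  set w := B - ((1-t)*c + t*q) with hw_def
  clear_value w
  have hwn : w/n = B/n - m := by
    rw [hw_def, ← hnm]; field_simp
  have hz_ub : z ≤ w/n + 4*d^2 := by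
    rw [hz_def, hA_def, hwn]; linarith
  have hz_lb : w/n - 2*d^2 ≤ z := by
    rw [hz_def, hA_def, hwn]; linarith
  have hcq0 : 0 ≤ (1-t)*c + t*q := by positivity
  have hcqM : (1-t)*c + t*q ≤ M := by
    linarith [mul_le_mul_of_nonneg_left hMc h1t, mul_le_mul_of_nonneg_left hMq ht0]
  have hwM_ub : w ≤ M := by rw [hw_def]; linarith
  have hwM_lb : -M ≤ w := by rw [hw_def]; linarith
  have hwd_ub : w/n ≤ d := by rw [hd_def]; gcongr
  have hwd_lb : -d ≤ w/n := by
    rw [hd_def, ← neg_div]; gcongr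
  have hz_ub2 : z ≤ 3*d/2 := by linarith
  have hz_lb2 : -(3*d/2) ≤ z := by linarith
  have hz2 : z^2 ≤ (9/4)*d^2 := by
    have h := sq_le_sq' (show -(3*d/2) ≤ z by linarith) hz_ub2
    calc z^2 ≤ (3*d/2)^2 := h
      _ = (9/4)*d^2 := by ring
  have hA1 : A = 1 + z := by rw [hz_def]; ring
  have hzhalf : -(1/2 : ℝ) ≤ z := by linarith
  have hlog_ub : Real.log A ≤ z := by rw [hA1]; exact log_one_add_ub hzhalf
  have hlog_lb : z - 2*z^2 ≤ Real.log A := by rw [hA1]; exact log_one_add_lb hzhalf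
  have hd2n : d^2 * n = M^2/n := by rw [hd_def]; field_simp
  have hnw : n * (w/n) = w := by field_simp
  have h1 : n * Real.log A ≤ n * (w/n + 4*d^2) :=
    mul_le_mul_of_nonneg_left (le_trans hlog_ub hz_ub) hn0.le
  have h2 : n * (w/n - 2*d^2 - 2*z^2) ≤ n * Real.log A :=
    mul_le_mul_of_nonneg_left (by linarith) hn0.le
  have h3 : n * (w/n + 4*d^2) = w + 4*(M^2/n) := by rw [mul_add, hnw, ← hd2n]; ring
  have h4 : n * (w/n - 2*d^2 - 2*z^2) = w - 2*(d^2*n) - 2*(z^2*n) := by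
    rw [mul_sub, mul_sub, hnw]; ring
  have hz2n : z^2 * n ≤ (9/4)*(M^2/n) := by
    rw [← hd2n]
    have := mul_le_mul_of_nonneg_right hz2 hn0.le
    linarith
  have hub : n * Real.log A ≤ w + 4*(M^2/n) := h3 ▸ h1
  have hlb : w - 2*(M^2/n) - 2*((9/4)*(M^2/n)) ≤ n * Real.log A := by
    have h2' := h2
    rw [h4, hd2n] at h2'
    linarith
  have hMn : 0 < M^2/n := by positivity
  have hEq : (1-t)*c + t*q - B = -w := by rw [hw_def]; ring
  rw [key, hEq, abs_le]
  have hrw : n * -Real.log A - -w = w - n * Real.log A := by ring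
  have he : 22 * M^2/n = 22 * (M^2/n) := by ring
  constructor
  · rw [hrw]; linarith only [hub, hMn, he]
  · rw [hrw]; linarith only [hlb, hMn, he]

lemma chern_geom_le {c q t M : ℝ} (hc : 0 < c) (hq : 0 < q) (ht0 : 0 ≤ t) (ht1 : t ≤ 1)
    (hMc : c ≤ M) (hMq : q ≤ M) : c^(1-t)*q^t ≤ M := by
  have hM0 : 0 < M := lt_of_lt_of_le hc hMc
  calc c^(1-t)*q^t ≤ M^(1-t) * M^t := by
        apply mul_le_mul (Real.rpow_le_rpow hc.le hMc (by linarith))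
          (Real.rpow_le_rpow hq.le hMq ht0) (Real.rpow_nonneg hq.le _)
          (Real.rpow_nonneg hM0.le _)
    _ = M := by
        rw [← Real.rpow_add hM0, show (1:ℝ)-t+t = 1 by ring, Real.rpow_one]

lemma phi_small {c q t M n : ℝ} (hc : 0 < c) (hq : 0 < q) (ht0 : 0 ≤ t) (ht1 : t ≤ 1)
    (hMc : c ≤ M) (hMq : q ≤ M) (hn : 8*M ≤ n) :
    |chernoffPhi (c/n) (q/n) t| ≤ 5*M/n := by
  have hM0 : 0 < M := lt_of_lt_of_le hc hMc
  have hn0 : (0:ℝ) < n := by nlinarith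
  have hcore := phi_core hc hq ht0 ht1 hMc hMq hn
  have hB0 : 0 < c^(1-t)*q^t :=
    mul_pos (Real.rpow_pos_of_pos hc _) (Real.rpow_pos_of_pos hq _)
  have hBM : c^(1-t)*q^t ≤ M := chern_geom_le hc hq ht0 ht1 hMc hMq
  have h1t : (0:ℝ) ≤ 1 - t := by linarith
  have hcq0 : 0 ≤ (1-t)*c + t*q := by positivity
  have hcqM : (1-t)*c + t*q ≤ M := by
    linarith [mul_le_mul_of_nonneg_left hMc h1t, mul_le_mul_of_nonneg_left hMq ht0]
  have hE : |(1-t)*c + t*q - c^(1-t)*q^t| ≤ M := by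
    rw [abs_le]; constructor <;> linarith
  have h22 : 22*M^2/n ≤ 3*M := by
    rw [div_le_iff₀ hn0]
    nlinarith [mul_le_mul_of_nonneg_left hn hM0.le]
  have htri : |n * chernoffPhi (c/n) (q/n) t| ≤ 4*M := by
    have h' : |n * chernoffPhi (c/n) (q/n) t| ≤
        |n * chernoffPhi (c/n) (q/n) t - ((1-t)*c + t*q - c^(1-t)*q^t)|
          + |(1-t)*c + t*q - c^(1-t)*q^t| := by
      have h2 := abs_add_le (n * chernoffPhi (c/n) (q/n) t - ((1-t)*c + t*q - c^(1-t)*q^t))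
        ((1-t)*c + t*q - c^(1-t)*q^t)
      simpa using h2
    calc |n * chernoffPhi (c/n) (q/n) t| ≤ 22*M^2/n + M := h'.trans (add_le_add hcore hE)
      _ ≤ 4*M := by linarith
  have habs : |n * chernoffPhi (c/n) (q/n) t| = n * |chernoffPhi (c/n) (q/n) t| := by
    rw [abs_mul, abs_of_pos hn0]
  rw [le_div_iff₀ hn0]
  rw [habs] at htri
  nlinarith [abs_nonneg (chernoffPhi (c/n) (q/n) t)]

lemma pointwise_bound {c lam n t : ℝ} (hc : 0 < c) (hlam : |lam| < c)
    (hn : 16*c ≤ n) (ht0 : 0 ≤ t) (ht1 : t ≤ 1) :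
    |((n^2/4 - n/2) * chernoffPhi (c/n) ((c+lam)/n) t
        + (n^2/4) * chernoffPhi (c/n) ((c-lam)/n) t)/n
      - (1/4)*(2*c - c^(1-t)*((c+lam)^t + (c-lam)^t))| ≤ (44*c^2 + 6*c)/n := by
  obtain ⟨hl1, hl2⟩ := abs_lt.mp hlam
  have hq1 : 0 < c + lam := by linarith
  have hq2 : 0 < c - lam := by linarith
  have hn0 : (0:ℝ) < n := by nlinarith
  have hn' : 8*(2*c) ≤ n := by linarith
  have hcore1 := phi_core hc hq1 ht0 ht1 (show c ≤ 2*c by linarith)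
    (show c + lam ≤ 2*c by linarith) hn'
  have hcore2 := phi_core hc hq2 ht0 ht1 (show c ≤ 2*c by linarith)
    (show c - lam ≤ 2*c by linarith) hn'
  have hsmall1 := phi_small hc hq1 ht0 ht1 (show c ≤ 2*c by linarith)
    (show c + lam ≤ 2*c by linarith) hn'
  set φ1 := chernoffPhi (c/n) ((c+lam)/n) t with hφ1
  set φ2 := chernoffPhi (c/n) ((c-lam)/n) t with hφ2
  set h1 := (1-t)*c + t*(c+lam) - c^(1-t)*(c+lam)^t with hh1
  set h2 := (1-t)*c + t*(c-lam) - c^(1-t)*(c-lam)^t with hh2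
  clear_value φ1 φ2 h1 h2
  have hg : (1/4)*(2*c - c^(1-t)*((c+lam)^t + (c-lam)^t)) = (1/4)*(h1 + h2) := by
    rw [hh1, hh2]; ring
  have hdecomp : ((n^2/4 - n/2)*φ1 + (n^2/4)*φ2)/n - (1/4)*(h1+h2)
      = (1/4)*(n*φ1 - h1) + (1/4)*(n*φ2 - h2) + (-(1/2))*φ1 := by
    field_simp; ring
  rw [hg, hdecomp]
  have habs := abs_add_three ((1/4)*(n*φ1 - h1)) ((1/4)*(n*φ2 - h2)) ((-(1/2))*φ1)
  have he1 : |(1/4)*(n*φ1 - h1)| = (1/4)*|n*φ1 - h1| := by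
    rw [abs_mul]; norm_num
  have he2 : |(1/4)*(n*φ2 - h2)| = (1/4)*|n*φ2 - h2| := by
    rw [abs_mul]; norm_num
  have he3 : |(-(1/2))*φ1| = (1/2)*|φ1| := by
    rw [abs_mul]; norm_num
  rw [he1, he2, he3] at habs
  have hsum : (1/4)*(22*(2*c)^2/n) + (1/4)*(22*(2*c)^2/n) + (1/2)*(5*(2*c)/n)
      = (44*c^2 + 5*c)/n := by field_simp; ring
  have hfin : (44*c^2 + 5*c)/n ≤ (44*c^2 + 6*c)/n := by gcongr <;> linarith
  calc |(1/4)*(n*φ1 - h1) + (1/4)*(n*φ2 - h2) + (-(1/2))*φ1|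
      ≤ (1/4)*|n*φ1 - h1| + (1/4)*|n*φ2 - h2| + (1/2)*|φ1| := habs
    _ ≤ (1/4)*(22*(2*c)^2/n) + (1/4)*(22*(2*c)^2/n) + (1/2)*(5*(2*c)/n) := by
        gcongr
    _ = (44*c^2 + 5*c)/n := hsum
    _ ≤ (44*c^2 + 6*c)/n := hfin

/-- Per-vertex Chernoff information between the sparse two-block SBM and sparse
Erdős–Rényi: `C_n / n → J(λ)`, where both sides are suprema over the tilt `t ∈ [0,1]`. -/
theorem sbm_er_chernoff_per_vertex (c lam : ℝ) (hc : 0 < c) (hlam : |lam| < c) :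
    Tendsto
      (fun n : ℕ =>
        sSup ((fun t : ℝ =>
          ((n : ℝ) ^ 2 / 4 - (n : ℝ) / 2) * chernoffPhi (c / n) ((c + lam) / n) t +
            ((n : ℝ) ^ 2 / 4) * chernoffPhi (c / n) ((c - lam) / n) t) '' Set.Icc 0 1)
          / (n : ℝ))
      atTop
      (nhds (sSup ((fun t : ℝ =>
        (1 / 4) * (2 * c - c ^ (1 - t) * ((c + lam) ^ t + (c - lam) ^ t))) ''
          Set.Icc 0 1))) := by
  obtain ⟨hl1, hl2⟩ := abs_lt.mp hlam
  have hq1 : 0 < c + lam := by linarith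
  have hq2 : 0 < c - lam := by linarith
  set g : ℝ → ℝ := fun t => (1/4)*(2*c - c^(1-t)*((c+lam)^t + (c-lam)^t)) with hg_def
  set F : ℕ → ℝ → ℝ := fun n t =>
    ((n : ℝ)^2/4 - (n:ℝ)/2) * chernoffPhi (c/n) ((c+lam)/n) t +
      ((n:ℝ)^2/4) * chernoffPhi (c/n) ((c-lam)/n) t with hF_def
  set gS := sSup (g '' Set.Icc 0 1) with hgS_def
  have h01 : (0:ℝ) ∈ Set.Icc (0:ℝ) 1 := by norm_num
  have hne : (g '' Set.Icc (0:ℝ) 1).Nonempty := ⟨g 0, Set.mem_image_of_mem _ h01⟩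
  have hgub : ∀ t ∈ Set.Icc (0:ℝ) 1, g t ≤ c/2 := by
    intro t ht
    have h2 : 0 ≤ (c+lam)^t := Real.rpow_nonneg hq1.le _
    have h3 : 0 ≤ (c-lam)^t := Real.rpow_nonneg hq2.le _
    have h4 : 0 ≤ c^(1-t) * ((c+lam)^t + (c-lam)^t) :=
      mul_nonneg (Real.rpow_nonneg hc.le _) (by linarith)
    have : g t = (1/4)*(2*c - c^(1-t)*((c+lam)^t + (c-lam)^t)) := rfl
    rw [this]; linarith
  have hbddg : BddAbove (g '' Set.Icc (0:ℝ) 1) := by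
    refine ⟨c/2, ?_⟩
    rintro y ⟨t, ht, rfl⟩
    exact hgub t ht
  set K := 44*c^2 + 6*c with hK_def
  have hK0 : 0 < K := by rw [hK_def]; nlinarith
  have key : ∀ n : ℕ, 16*c ≤ (n:ℝ) → |sSup (F n '' Set.Icc 0 1) / n - gS| ≤ K / n := by
    intro n hn
    have hn0 : (0:ℝ) < n := by nlinarith
    have hpt : ∀ t ∈ Set.Icc (0:ℝ) 1, |F n t / n - g t| ≤ K/n := by
      intro t ht
      exact pointwise_bound hc hlam hn ht.1 ht.2
    have hub : ∀ t ∈ Set.Icc (0:ℝ) 1, F n t ≤ n * g t + K := by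
      intro t ht
      have h' := (abs_le.mp (hpt t ht)).2
      have h'' := mul_le_mul_of_nonneg_right (show F n t / n ≤ g t + K/n by linarith) hn0.le
      rw [div_mul_cancel₀ _ hn0.ne'] at h''
      calc F n t ≤ (g t + K/n)*(n:ℝ) := h''
        _ = n * g t + K := by field_simp
    have hlb : ∀ t ∈ Set.Icc (0:ℝ) 1, (n:ℝ) * g t - K ≤ F n t := by
      intro t ht
      have h' := (abs_le.mp (hpt t ht)).1
      have h'' := mul_le_mul_of_nonneg_right (show g t - K/n ≤ F n t / n by linarith) hn0.le
      rw [div_mul_cancel₀ _ hn0.ne'] at h''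
      calc (n:ℝ) * g t - K = (g t - K/n)*(n:ℝ) := by field_simp
        _ ≤ F n t := h''
    have hFbdd : BddAbove (F n '' Set.Icc (0:ℝ) 1) := by
      refine ⟨(n:ℝ)*gS + K, ?_⟩
      rintro y ⟨t, ht, rfl⟩
      have hgt : g t ≤ gS := le_csSup hbddg (Set.mem_image_of_mem g ht)
      have := mul_le_mul_of_nonneg_left hgt (show (0:ℝ) ≤ n by positivity)
      linarith [hub t ht]
    have hFne : (F n '' Set.Icc (0:ℝ) 1).Nonempty := ⟨F n 0, Set.mem_image_of_mem _ h01⟩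
    have hS_ub : sSup (F n '' Set.Icc (0:ℝ) 1) ≤ (n:ℝ)*gS + K := by
      apply csSup_le hFne
      rintro y ⟨t, ht, rfl⟩
      have hgt : g t ≤ gS := le_csSup hbddg (Set.mem_image_of_mem g ht)
      have := mul_le_mul_of_nonneg_left hgt (show (0:ℝ) ≤ n by positivity)
      linarith [hub t ht]
    have hS_lb : (n:ℝ)*gS - K ≤ sSup (F n '' Set.Icc (0:ℝ) 1) := by
      have h' : gS ≤ (sSup (F n '' Set.Icc (0:ℝ) 1) + K)/n := by
        apply csSup_le hne
        rintro y ⟨t, ht, rfl⟩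
        rw [le_div_iff₀ hn0]
        have hFle : F n t ≤ sSup (F n '' Set.Icc (0:ℝ) 1) :=
          le_csSup hFbdd (Set.mem_image_of_mem (F n) ht)
        have := hlb t ht
        nlinarith
      rw [le_div_iff₀ hn0] at h'
      nlinarith
    rw [abs_le]
    constructor
    · have h1' : gS - K/(n:ℝ) ≤ sSup (F n '' Set.Icc (0:ℝ) 1) / n := by
        rw [le_div_iff₀ hn0]
        calc (gS - K/(n:ℝ))*(n:ℝ) = (n:ℝ)*gS - K := by field_simp
          _ ≤ _ := hS_lb
      linarith
    · have h2' : sSup (F n '' Set.Icc (0:ℝ) 1) / n ≤ gS + K/(n:ℝ) := by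
        rw [div_le_iff₀ hn0]
        calc sSup (F n '' Set.Icc (0:ℝ) 1) ≤ (n:ℝ)*gS + K := hS_ub
          _ = (gS + K/(n:ℝ))*(n:ℝ) := by field_simp
      linarith
  have hev : ∀ᶠ n : ℕ in atTop, ‖sSup (F n '' Set.Icc (0:ℝ) 1)/(n:ℝ) - gS‖ ≤ K/(n:ℝ) := by
    filter_upwards [eventually_ge_atTop (⌈(16:ℝ)*c⌉₊)] with n hn
    have hcast : ((⌈(16:ℝ)*c⌉₊ : ℕ) : ℝ) ≤ (n:ℝ) := by exact_mod_cast hn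
    have h16 : 16*c ≤ (n:ℝ) := le_trans (Nat.le_ceil _) hcast
    simpa [Real.norm_eq_abs] using key n h16
  have hKlim : Tendsto (fun n : ℕ => K/(n:ℝ)) atTop (nhds 0) :=
    tendsto_const_div_atTop_nhds_zero_nat K
  have hlim := squeeze_zero_norm' hev hKlim
  have hfinal := hlim.add_const gS
  simpa using hfinal
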